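/- arXiv:2503.09489 — 3 statements merged into one kernel-verified Lean document; each statement's English description precedes it below -/
import Mathlib

section
/- For all complex numbers z, z₀ and positive reals d, d₀, the function f(z,d) = log(1 + |z|²/d) satisfies the lower bound f(z,d) ≥ log(1+|z₀|²/d₀) + 2·Re(conj(z₀)·z/d₀) − (|z₀|²/(d₀(d₀+|z₀|²)))·(|z|² + d) − |z₀|²/d₀, with equality when (z,d) = (z₀,d₀). -/
open Complex

/-- First-order Taylor-expansion lower bound of `log(1 + |z|^2 / d)` (Lemma 2),
with equality at `(z, d) = (z₀, d₀)`. -/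
theorem stmt_0 (z z₀ : ℂ) (d d₀ : ℝ) (hd : 0 < d) (hd₀ : 0 < d₀) :
    Real.log (1 + ‖z‖ ^ 2 / d) ≥
      Real.log (1 + ‖z₀‖ ^ 2 / d₀)
        + 2 * (((starRingEnd ℂ) z₀ * z).re / d₀)
        - ‖z₀‖ ^ 2 / (d₀ * (d₀ + ‖z₀‖ ^ 2)) * (‖z‖ ^ 2 + d)
        - ‖z₀‖ ^ 2 / d₀
    ∧ (z = z₀ → d = d₀ →
        Real.log (1 + ‖z‖ ^ 2 / d) =
          Real.log (1 + ‖z₀‖ ^ 2 / d₀)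
            + 2 * (((starRingEnd ℂ) z₀ * z).re / d₀)
            - ‖z₀‖ ^ 2 / (d₀ * (d₀ + ‖z₀‖ ^ 2)) * (‖z‖ ^ 2 + d)
            - ‖z₀‖ ^ 2 / d₀) := by
  have ha0 : (0:ℝ) ≤ ‖z‖ ^ 2 := sq_nonneg _
  have hb0 : (0:ℝ) ≤ ‖z₀‖ ^ 2 := sq_nonneg _
  set a := ‖z‖ ^ 2 with ha
  set b := ‖z₀‖ ^ 2 with hb
  set R := ((starRingEnd ℂ) z₀ * z).re with hR
  have ht : 0 < a + d := by linarith
  have hs : 0 < d₀ + b := by linarith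
  have hRe : R ≤ ‖z₀‖ * ‖z‖ := by
    calc R ≤ ‖(starRingEnd ℂ) z₀ * z‖ := Complex.re_le_norm _
    _ = ‖z₀‖ * ‖z‖ := by rw [norm_mul, Complex.norm_conj]
  have hx : 0 < 1 + a / d := by positivity
  have hy : 0 < 1 + b / d₀ := by positivity
  have h1 : Real.log (1 + b / d₀) - Real.log (1 + a / d) ≤ (1 + b / d₀) / (1 + a / d) - 1 := by
    have := Real.log_le_sub_one_of_pos (div_pos hy hx)
    rwa [Real.log_div hy.ne' hx.ne'] at this
  have key : (1 + b / d₀) / (1 + a / d) - 1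
      + (2 * (R / d₀) - b / (d₀ * (d₀ + b)) * (a + d) - b / d₀)
      = (-((d₀ + b) ^ 2 * a) + 2 * R * (a + d) * (d₀ + b) - b * (a + d) ^ 2)
        / (d₀ * (a + d) * (d₀ + b)) := by
    field_simp
    ring
  have hN : -((d₀ + b) ^ 2 * a) + 2 * R * (a + d) * (d₀ + b) - b * (a + d) ^ 2 ≤ 0 := by
    nlinarith [sq_nonneg ((d₀ + b) * ‖z‖ - ‖z₀‖ * (a + d)),
      mul_nonneg (mul_nonneg ht.le hs.le) (sub_nonneg.mpr hRe),
      norm_nonneg z, norm_nonneg z₀]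
  have hD : 0 < d₀ * (a + d) * (d₀ + b) := by positivity
  have hle : (1 + b / d₀) / (1 + a / d) - 1
      + (2 * (R / d₀) - b / (d₀ * (d₀ + b)) * (a + d) - b / d₀) ≤ 0 := by
    rw [key]
    exact div_nonpos_of_nonpos_of_nonneg hN hD.le
  constructor
  · linarith
  · intro hz hdd
    subst hz hdd
    have hab : a = b := rfl
    have hRR : R = b := by
      rw [hR, hb, Complex.sq_norm, mul_comm, Complex.mul_conj, Complex.ofReal_re]
    rw [hRR, hab]
    have h0 : 2 * (b / d) - b / (d * (d + b)) * (b + d) - b / d = 0 := by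
      field_simp
      ring
    linarith
end

section
/- For any two positive definite Hermitian matrices Z and Z₀ of the same size, −tr(Z⁻¹) ≤ tr(Z₀⁻¹ Z Z₀⁻¹) − 2·tr(Z₀⁻¹), with equality when Z = Z₀. -/
open Matrix
open scoped ComplexOrder

lemma psd_trace_re_nonneg {n : ℕ} {A : Matrix (Fin n) (Fin n) ℂ} (hA : A.PosSemidef) :
    0 ≤ (Matrix.trace A).re := by
  have h : ∀ i, 0 ≤ (A i i).re := by
    intro i
    have h0 : (0:ℂ) ≤ A i i := by
      have := hA.dotProduct_mulVec_nonneg (Pi.single i 1)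
      simpa [Matrix.mulVec_single, dotProduct, Pi.single_apply, apply_ite] using this
    exact (Complex.le_def.mp h0).1
  simpa [Matrix.trace, Matrix.diag, Complex.re_sum] using Finset.sum_nonneg fun i _ => h i

/-- Linearization upper bound for `-tr(Z⁻¹)` over positive definite matrices (Lemma 3),
with equality at `Z = Z₀`. -/
theorem stmt_1 {n : ℕ} (Z Z₀ : Matrix (Fin n) (Fin n) ℂ)
    (hZ : Z.PosDef) (hZ₀ : Z₀.PosDef) :
    -(Matrix.trace Z⁻¹).re ≤
        (Matrix.trace (Z₀⁻¹ * Z * Z₀⁻¹)).re - 2 * (Matrix.trace Z₀⁻¹).re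
    ∧ (Z = Z₀ →
        -(Matrix.trace Z⁻¹).re =
          (Matrix.trace (Z₀⁻¹ * Z * Z₀⁻¹)).re - 2 * (Matrix.trace Z₀⁻¹).re) := by
  set M := Z₀⁻¹ - Z⁻¹ with hMdef
  have hMH : Mᴴ = M := by
    have h1 : (Z₀⁻¹)ᴴ = Z₀⁻¹ := (hZ₀.isHermitian.inv).eq
    have h2 : (Z⁻¹)ᴴ = Z⁻¹ := (hZ.isHermitian.inv).eq
    simp [hMdef, h1, h2]
  have hpsd : (M * Z * M).PosSemidef := by
    have := hZ.posSemidef.mul_mul_conjTranspose_same M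
    rwa [hMH] at this
  have h1 : Z * Z⁻¹ = 1 := Matrix.mul_nonsing_inv Z hZ.det_pos.ne'.isUnit
  have h2 : Z⁻¹ * Z = 1 := Matrix.nonsing_inv_mul Z hZ.det_pos.ne'.isUnit
  have hexp : M * Z * M = Z₀⁻¹ * Z * Z₀⁻¹ - Z₀⁻¹ - Z₀⁻¹ + Z⁻¹ := by
    have : Z₀⁻¹ * (Z * Z⁻¹) = Z₀⁻¹ := by rw [h1, mul_one]
    have h3 : Z⁻¹ * Z * Z₀⁻¹ = Z₀⁻¹ := by rw [h2, one_mul]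
    have h4 : Z⁻¹ * Z * Z⁻¹ = Z⁻¹ := by rw [h2, one_mul]
    have h5 : Z₀⁻¹ * Z * Z⁻¹ = Z₀⁻¹ := by rw [Matrix.mul_assoc, h1, mul_one]
    simp only [hMdef, Matrix.sub_mul, Matrix.mul_sub, h3, h4, h5]
    abel
  have key : 0 ≤ (Matrix.trace (Z₀⁻¹ * Z * Z₀⁻¹)).re - 2 * (Matrix.trace Z₀⁻¹).re
      + (Matrix.trace Z⁻¹).re := by
    have := psd_trace_re_nonneg hpsd
    rw [hexp] at this
    simp only [Matrix.trace_add, Matrix.trace_sub, Complex.add_re, Complex.sub_re] at this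
    linarith
  constructor
  · linarith
  · intro hEq
    subst hEq
    have hMz : M = 0 := by simp [hMdef]
    have : M * Z * M = 0 := by rw [hMz]; simp
    rw [hexp] at this
    have := congrArg Matrix.trace this
    simp only [Matrix.trace_add, Matrix.trace_sub, Matrix.trace_zero] at this
    have := congrArg Complex.re this
    simp only [Complex.add_re, Complex.sub_re, Complex.zero_re] at this
    linarith
end

section
/- Let f : E → ℝ be ρ-weakly convex and differentiable on a real inner product space E, let B be a subset of E on which ‖W‖ is constant (a sphere), and let λ ≥ ρ/2. If W^{t+1} ∈ B maximizes ⟨∇f(W^t) + 2λW^t, W⟩ over W ∈ B where W^t ∈ B, then f(W^{t+1}) ≥ f(W^t). -/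
open RealInnerProductSpace

/-- Monotone ascent of the projected-gradient/SCA iteration on the sphere for a
`ρ`-weakly convex objective with shift parameter `λ ≥ ρ/2`. -/
theorem stmt_11 {E : Type*} [NormedAddCommGroup E] [InnerProductSpace ℝ E]
    [CompleteSpace E]
    (f : E → ℝ) (hf : Differentiable ℝ f) (ρ : ℝ)
    (hwc : ConvexOn ℝ Set.univ (fun w => f w + ρ / 2 * ‖w‖ ^ 2))
    (B : Set E) (P : ℝ) (hB : ∀ W ∈ B, ‖W‖ ^ 2 = P)
    (lam : ℝ) (hlam : ρ / 2 ≤ lam)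
    (Wt Wt1 : E) (hWt : Wt ∈ B) (hWt1 : Wt1 ∈ B)
    (hmax : ∀ W ∈ B,
      ⟪gradient f Wt + (2 * lam) • Wt, W⟫ ≤ ⟪gradient f Wt + (2 * lam) • Wt, Wt1⟫) :
    f Wt ≤ f Wt1 := by
  set g : E → ℝ := fun w => f w + lam * ‖w‖ ^ 2 with hg_def
  -- convexity of the squared norm
  have hsq : ConvexOn ℝ Set.univ (fun w : E => ‖w‖ ^ 2) := by
    refine ⟨convex_univ, fun x _ y _ a b ha hb hab => ?_⟩
    simp only [smul_eq_mul]
    have h1 : ‖a • x + b • y‖ ^ 2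
        = a ^ 2 * ‖x‖ ^ 2 + 2 * (a * b) * ⟪x, y⟫ + b ^ 2 * ‖y‖ ^ 2 := by
      rw [norm_add_sq_real]
      rw [norm_smul, norm_smul, real_inner_smul_left, real_inner_smul_right]
      simp [abs_of_nonneg ha, abs_of_nonneg hb, mul_pow]
      ring
    have h2 : ⟪x, y⟫ ≤ ‖x‖ * ‖y‖ := real_inner_le_norm x y
    nlinarith [mul_nonneg (mul_nonneg ha hb) (sq_nonneg (‖x‖ - ‖y‖)),
      mul_nonneg ha hb, sq_nonneg (‖x‖ - ‖y‖)]
  -- g is convex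
  have hg_conv : ConvexOn ℝ Set.univ g := by
    have h0 : (0 : ℝ) ≤ lam - ρ / 2 := by linarith
    have := hwc.add (hsq.smul h0)
    convert this using 1
    · rfl
    funext w
    simp only [hg_def, Pi.add_apply, Pi.smul_apply, smul_eq_mul]
    ring
  set d : E := Wt1 - Wt with hd_def
  set v : E := gradient f Wt + (2 * lam) • Wt with hv_def
  -- the 1D restriction
  set h : ℝ → ℝ := fun t => g (Wt + t • d) with hh_def
  have hline : ∀ t : ℝ, (AffineMap.lineMap Wt Wt1 : ℝ →ᵃ[ℝ] E) t = Wt + t • d := by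
    intro t
    simp [AffineMap.lineMap_apply, hd_def]
    abel
  have hh_conv : ConvexOn ℝ Set.univ h := by
    have := hg_conv.comp_affineMap (AffineMap.lineMap Wt Wt1 : ℝ →ᵃ[ℝ] E)
    simp only [Set.preimage_univ] at this
    convert this using 1
    · rfl
    · rfl
    · rfl
    · rfl
    funext t
    simp [hh_def, hline t]
  -- derivative of h at 0
  have hc : ∀ t : ℝ, HasDerivAt (fun s : ℝ => Wt + s • d) d t := by
    intro t
    simpa using ((hasDerivAt_id t).smul_const d).const_add Wt
  have hfd : HasDerivAt (fun t : ℝ => f (Wt + t • d)) ⟪gradient f Wt, d⟫ 0 := by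
    have hgrad : HasGradientAt f (gradient f Wt) Wt := (hf Wt).hasGradientAt
    have hF : HasFDerivAt f ((InnerProductSpace.toDual ℝ E) (gradient f Wt)) Wt :=
      hgrad
    have hF' : HasFDerivAt f ((InnerProductSpace.toDual ℝ E) (gradient f Wt))
        (Wt + (0:ℝ) • d) := by simpa using hF
    have := hF'.comp_hasDerivAt 0 (hc 0)
    simp only [InnerProductSpace.toDual_apply_apply] at this
    exact this
  have hqd : HasDerivAt (fun t : ℝ => ‖Wt + t • d‖ ^ 2) (2 * ⟪Wt, d⟫) 0 := by
    have := (hc 0).inner ℝ (hc 0)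
    have h2 : (fun t : ℝ => ⟪Wt + t • d, Wt + t • d⟫) = fun t : ℝ => ‖Wt + t • d‖ ^ 2 := by
      funext t
      rw [real_inner_self_eq_norm_sq]
    rw [h2] at this
    convert this using 1
    · rfl
    · rfl
    simp [real_inner_comm]
    ring
  have hh_deriv : HasDerivAt h ⟪v, d⟫ 0 := by
    have := hfd.add (hqd.const_mul lam)
    convert this using 1
    · rfl
    · rfl
    · rfl
    simp only [hv_def, inner_add_left, real_inner_smul_left]
    ring
  -- first-order inequality: h'(0) ≤ h 1 - h 0
  have hslope : ⟪v, d⟫ ≤ h 1 - h 0 := by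
    have := hh_conv.le_slope_of_hasDerivAt (Set.mem_univ (0:ℝ)) (Set.mem_univ (1:ℝ))
      zero_lt_one hh_deriv
    simpa [slope_def_field] using this
  -- h'(0) ≥ 0 by the maximality hypothesis
  have hnn : (0 : ℝ) ≤ ⟪v, d⟫ := by
    have := hmax Wt hWt
    rw [hd_def, inner_sub_right]
    linarith [this]
  have hval : h 0 = g Wt ∧ h 1 = g Wt1 := by
    constructor <;> simp [hh_def, hd_def]
  have : g Wt ≤ g Wt1 := by
    have h0 : h 0 = g Wt := hval.1
    have h1 : h 1 = g Wt1 := hval.2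
    linarith
  have : f Wt + lam * P ≤ f Wt1 + lam * P := by
    have e0 := hB Wt hWt
    have e1 := hB Wt1 hWt1
    simpa [hg_def, e0, e1] using this
  linarith
end
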